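/- arXiv:math/0309151 — 2 statements merged into one kernel-verified Lean document; each statement's English description precedes it below -/
import Mathlib

section
/- If G is a finite simple graph each of whose connected components H satisfies α(H) = 2, then the independence polynomial I(G;x) has only real roots, and hence its coefficient sequence is log-concave and unimodal. -/
open Polynomial Classical in
/-- The set of stable (independent) sets of a graph, as finsets. -/
noncomputable def stableSets {V : Type*} [Fintype V] (G : SimpleGraph V) : Finset (Finset V) :=
  Finset.univ.filter (fun s : Finset V => ∀ v ∈ s, ∀ w ∈ s, ¬ G.Adj v w)

open Polynomial in
/-- The independence polynomial of a finite simple graph. -/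
noncomputable def indepPoly {V : Type*} [Fintype V] (G : SimpleGraph V) : Polynomial ℤ :=
  ∑ s ∈ stableSets G, X ^ s.card

/-- The independence number: the maximum size of a stable set. -/
noncomputable def indepNum {V : Type*} [Fintype V] (G : SimpleGraph V) : ℕ :=
  (stableSets G).sup Finset.card

open Classical in
/-- `sCount G k` is the number of stable sets of cardinality `k` in `G`. -/
noncomputable def sCount {V : Type*} [Fintype V] (G : SimpleGraph V) (k : ℕ) : ℕ :=
  ((stableSets G).filter (fun s => s.card = k)).card

/-- A polynomial is unimodal if its coefficient sequence increases up to some mode `k`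
and decreases afterwards. -/
def PolyUnimodal (p : Polynomial ℤ) : Prop :=
  ∃ k, (∀ i j, i ≤ j → j ≤ k → p.coeff i ≤ p.coeff j) ∧
    (∀ i j, k ≤ i → i ≤ j → p.coeff j ≤ p.coeff i)

/-- A polynomial is log-concave if `a_{i-1} * a_{i+1} ≤ a_i ^ 2` for all `i ≥ 1`. -/
def PolyLogConcave (p : Polynomial ℤ) : Prop :=
  ∀ i, 1 ≤ i → p.coeff (i - 1) * p.coeff (i + 1) ≤ p.coeff i ^ 2


section Aux

open Polynomial

/-- Nonneg coefficients, downward-closed support, log-concave. -/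
def GoodP (p : Polynomial ℝ) : Prop :=
  (∀ i, 0 ≤ p.coeff i) ∧ (∀ i, p.coeff (i+1) ≠ 0 → p.coeff i ≠ 0) ∧
    (∀ i, p.coeff i * p.coeff (i+2) ≤ p.coeff (i+1)^2)

lemma goodP_one : GoodP 1 := by
  refine ⟨fun i => ?_, fun i h => ?_, fun i => ?_⟩
  · simp [Polynomial.coeff_one]; positivity
  · simp [Polynomial.coeff_one] at h
  · simp [Polynomial.coeff_one]

lemma GoodP.cross {p : Polynomial ℝ} (hp : GoodP p) (i : ℕ) :
    p.coeff i * p.coeff (i+3) ≤ p.coeff (i+1) * p.coeff (i+2) := by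
  obtain ⟨hnn, hsupp, hlc⟩ := hp
  by_cases h3 : p.coeff (i+3) = 0
  · rw [h3, mul_zero]; exact mul_nonneg (hnn _) (hnn _)
  · have h2 : p.coeff (i+2) ≠ 0 := hsupp _ h3
    have h1 : p.coeff (i+1) ≠ 0 := hsupp _ h2
    have p1 : 0 < p.coeff (i+1) := (hnn _).lt_of_ne (Ne.symm h1)
    have p2 : 0 < p.coeff (i+2) := (hnn _).lt_of_ne (Ne.symm h2)
    have A := hlc i
    have B := hlc (i+1)
    have := mul_le_mul A B (mul_nonneg (hnn _) (hnn _)) (sq_nonneg _)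
    nlinarith [hnn i, hnn (i+3)]

lemma GoodP.mul_linear {p : Polynomial ℝ} (hp : GoodP p) {r : ℝ} (hr : 0 ≤ r) :
    GoodP ((1 + C r * X) * p) := by
  obtain ⟨hnn, hsupp, hlc⟩ := hp
  have hco : ∀ i, ((1 + C r * X) * p).coeff (i+1) = p.coeff (i+1) + r * p.coeff i := by
    intro i
    rw [add_mul, one_mul, Polynomial.coeff_add, mul_assoc, Polynomial.coeff_C_mul,
      Polynomial.coeff_X_mul]
  have hco0 : ((1 + C r * X) * p).coeff 0 = p.coeff 0 := by
    rw [add_mul, one_mul, Polynomial.coeff_add, mul_assoc, Polynomial.coeff_C_mul,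
      Polynomial.mul_coeff_zero]
    simp
  refine ⟨fun i => ?_, fun i h => ?_, fun i => ?_⟩
  · cases i with
    | zero => rw [hco0]; exact hnn 0
    | succ n => rw [hco]; exact add_nonneg (hnn _) (mul_nonneg hr (hnn _))
  · -- support
    rw [hco] at h
    have key : p.coeff i ≠ 0 := by
      by_cases h1 : p.coeff (i+1) = 0
      · rw [h1, zero_add] at h
        intro h0; rw [h0, mul_zero] at h; exact h rfl
      · exact hsupp _ h1
    have kpos : 0 < p.coeff i := (hnn _).lt_of_ne (Ne.symm key)
    cases i with
    | zero => rw [hco0]; exact key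
    | succ n =>
      rw [hco]
      have : 0 < p.coeff (n+1) + r * p.coeff n :=
        add_pos_of_pos_of_nonneg kpos (mul_nonneg hr (hnn _))
      exact ne_of_gt this
  · -- log-concavity
    cases i with
    | zero =>
      rw [hco0, hco, hco]
      nlinarith [hlc 0, hnn 0, hnn 1, hnn 2, mul_nonneg (mul_nonneg hr hr) (mul_nonneg (hnn 0) (hnn 0)), mul_nonneg hr (mul_nonneg (hnn 0) (hnn 1))]
    | succ n =>
      rw [hco, hco, hco]
      have hc := GoodP.cross ⟨hnn, hsupp, hlc⟩ n
      have h1 := hlc n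
      have h2 := hlc (n+1)
      have e3 : n + 1 + 2 = n + 3 := rfl
      rw [e3]
      nlinarith [mul_nonneg hr (mul_nonneg (hnn n) (hnn (n+1))),
        mul_nonneg (mul_nonneg hr hr) (mul_nonneg (hnn n) (hnn n)),
        mul_le_mul_of_nonneg_left hc hr, mul_le_mul_of_nonneg_left h1 (mul_nonneg hr hr)]


lemma goodP_prod {ι : Type*} (s : Finset ι) (f g : ι → ℝ)
    (hf : ∀ i ∈ s, 0 ≤ f i) (hg : ∀ i ∈ s, 0 ≤ g i) :
    GoodP (∏ i ∈ s, ((1 + C (f i) * X) * (1 + C (g i) * X))) := by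
  induction s using Finset.cons_induction with
  | empty => simpa using goodP_one
  | cons a s ha ih =>
    rw [Finset.prod_cons, mul_assoc]
    exact ((ih (fun i hi => hf i (Finset.mem_cons_of_mem hi))
        (fun i hi => hg i (Finset.mem_cons_of_mem hi))).mul_linear
        (hg a (Finset.mem_cons_self a s))).mul_linear (hf a (Finset.mem_cons_self a s))

lemma GoodP.unimodal {p : Polynomial ℝ} (hp : GoodP p) :
    ∃ k, (∀ i j, i ≤ j → j ≤ k → p.coeff i ≤ p.coeff j) ∧
      (∀ i j, k ≤ i → i ≤ j → p.coeff j ≤ p.coeff i) := by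
  obtain ⟨hnn, hsupp, hlc⟩ := hp
  have hex : ∃ i, p.coeff (i+1) ≤ p.coeff i :=
    ⟨p.natDegree, by rw [p.coeff_natDegree_succ_eq_zero]; exact hnn _⟩
  set k := Nat.find hex with hk
  have hdec : ∀ i, k ≤ i → p.coeff (i+1) ≤ p.coeff i := by
    intro i hi
    induction i, hi using Nat.le_induction with
    | base => exact Nat.find_spec hex
    | succ n hn ihn =>
      by_cases h0 : p.coeff (n+1) = 0
      · have : p.coeff (n+2) = 0 := by
          by_contra hne; exact (hsupp _ hne) h0
        rw [h0, this]
      · have p1 : 0 < p.coeff (n+1) := (hnn _).lt_of_ne (Ne.symm h0)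
        have := hlc n
        nlinarith
  have hinc : ∀ i, i < k → p.coeff i ≤ p.coeff (i+1) := fun i hi =>
    (not_le.mp (Nat.find_min hex hi)).le
  refine ⟨k, fun i j hij hjk => ?_, fun i j hki hij => ?_⟩
  · induction j, hij using Nat.le_induction with
    | base => exact le_refl _
    | succ n hn ihn =>
      exact le_trans (ihn (le_trans (Nat.le_succ n) hjk))
        (hinc n (lt_of_lt_of_le (Nat.lt_succ_self n) hjk))
  · induction j, hij using Nat.le_induction with
    | base => exact le_refl _
    | succ n hn ihn => exact le_trans (hdec n (le_trans hki hn)) ihn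

lemma quad_im_zero (n m : ℝ) (hm : 0 ≤ m) (h : 4*m ≤ n^2) (z : ℂ)
    (hz : 1 + (n:ℂ)*z + (m:ℂ)*z^2 = 0) : z.im = 0 := by
  have him := congrArg Complex.im hz
  have hre := congrArg Complex.re hz
  simp [Complex.add_im, Complex.add_re, Complex.mul_im, Complex.mul_re, sq] at him hre
  by_contra hb
  have h2 : n + m * (2 * z.re) = 0 := by
    rcases mul_eq_zero.mp (show z.im * (n + m * (2 * z.re)) = 0 by
      linear_combination him) with h' | h'
    · exact absurd h' hb
    · exact h'
  have key : m * (z.re*z.re) + m * (z.im*z.im) = 1 := by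
    linear_combination (-1 : ℝ) * hre + z.re * h2
  have hm' : 0 < m := by
    rcases eq_or_lt_of_le hm with rfl | h'
    · simp at key
    · exact h'
  have hb2 : 0 < z.im * z.im := mul_self_pos.mpr hb
  have h2' : n = -(2*m*z.re) := by linarith
  rw [h2'] at h
  have hma : 1 ≤ m * (z.re*z.re) := by nlinarith [mul_pos hm' hm', sq_nonneg z.re]
  nlinarith [mul_pos hm' hb2]

lemma quad_factor_exists (n m : ℝ) (hn : 0 ≤ n) (hm : 0 ≤ m) (h : 4*m ≤ n^2) :
    ∃ r s : ℝ, 0 ≤ r ∧ 0 ≤ s ∧ r + s = n ∧ r * s = m := by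
  set d := n^2 - 4*m with hd
  have hd0 : 0 ≤ d := by linarith
  have hsq : Real.sqrt d ^ 2 = d := Real.sq_sqrt hd0
  have hsle : Real.sqrt d ≤ n := by
    have : Real.sqrt d ≤ Real.sqrt (n^2) := Real.sqrt_le_sqrt (by linarith)
    rwa [Real.sqrt_sq hn] at this
  refine ⟨(n + Real.sqrt d)/2, (n - Real.sqrt d)/2, by positivity, by linarith, by ring, ?_⟩
  have : (n + Real.sqrt d)/2 * ((n - Real.sqrt d)/2) = (n^2 - Real.sqrt d ^ 2)/4 := by ring
  rw [this, hsq]; rw [hd]; ring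

lemma quad_poly_factor (n m r s : ℝ) (h1 : r + s = n) (h2 : r * s = m) :
    (1 + C n * X + C m * X^2 : Polynomial ℝ) = (1 + C r * X) * (1 + C s * X) := by
  subst h1 h2
  simp only [C_add, C_mul]
  ring

open Polynomial Classical

variable {V : Type*} [Fintype V] (G : SimpleGraph V)

lemma mem_stableSets_iff (s : Finset V) :
    s ∈ stableSets G ↔ ∀ v ∈ s, ∀ w ∈ s, ¬ G.Adj v w := by
  simp [stableSets]

lemma coeff_indepPoly (k : ℕ) : (indepPoly G).coeff k = (sCount G k : ℤ) := by
  rw [indepPoly, Polynomial.finset_sum_coeff, sCount]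
  rw [Finset.card_filter]
  push_cast
  refine Finset.sum_congr rfl fun s _ => ?_
  rw [Polynomial.coeff_X_pow]
  by_cases h : s.card = k
  · simp [h]
  · simp [h]
    omega

lemma sCount_zero : sCount G 0 = 1 := by
  rw [sCount]
  convert Finset.card_singleton (∅ : Finset V)
  ext s
  simp [mem_stableSets_iff, Finset.card_eq_zero, stableSets]
  intro h; subst h; simp

lemma sCount_one : sCount G 1 = Fintype.card V := by
  rw [sCount]
  have himg : (stableSets G).filter (fun s => s.card = 1) =
      Finset.univ.image (fun v : V => {v}) := by
    ext s
    simp only [Finset.mem_filter, Finset.mem_image, Finset.mem_univ, true_and,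
      mem_stableSets_iff, stableSets, Finset.mem_filter]
    constructor
    · rintro ⟨-, hc⟩
      obtain ⟨v, rfl⟩ := Finset.card_eq_one.mp hc
      exact ⟨v, rfl⟩
    · rintro ⟨v, rfl⟩
      refine ⟨?_, Finset.card_singleton v⟩
      intro a ha b hb
      simp only [Finset.mem_singleton] at ha hb
      subst ha; subst hb; exact G.irrefl
  rw [himg, Finset.card_image_of_injective _ (fun a b h => by
    simpa using Finset.singleton_injective h), Finset.card_univ]

lemma sCount_eq_zero_of_lt {k : ℕ} (h : indepNum G < k) : sCount G k = 0 := by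
  rw [sCount, Finset.card_eq_zero, Finset.filter_eq_empty_iff]
  intro s hs hcard
  have := Finset.le_sup (f := Finset.card) hs
  rw [hcard] at this
  exact absurd (this.trans_lt h) (lt_irrefl _)

lemma mantel_bound (h3 : sCount G 3 = 0) :
    4 * sCount G 2 ≤ (Fintype.card V)^2 := by
  classical
  set n := Fintype.card V with hn
  set m := sCount G 2 with hm
  -- no stable triple
  have h3' : ∀ s : Finset V, s ∈ stableSets G → s.card ≠ 3 := by
    intro s hs hc
    have : s ∈ (stableSets G).filter (fun s => s.card = 3) := Finset.mem_filter.mpr ⟨hs, hc⟩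
    rw [sCount, Finset.card_eq_zero] at h3
    simp [h3] at this
  set N : V → Finset V := fun v => Finset.univ.filter (fun u => u ≠ v ∧ ¬G.Adj v u) with hN
  set d : V → ℕ := fun v => (N v).card with hd
  have memN : ∀ u v, u ∈ N v ↔ (u ≠ v ∧ ¬G.Adj v u) := by
    intro u v; simp [hN]
  have key2 : ∀ u v, u ≠ v → ¬G.Adj u v → d u + d v ≤ n := by
    intro u v huv hadj
    have hdis : Disjoint (N u) (N v) := by
      rw [Finset.disjoint_left]
      intro w hwu hwv
      rw [memN] at hwu hwv
      obtain ⟨hw1, hw2⟩ := hwu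
      obtain ⟨hw3, hw4⟩ := hwv
      have hcard : ({u, v, w} : Finset V).card = 3 := by
        rw [Finset.card_insert_of_notMem (by simp [huv, Ne.symm hw1]),
          Finset.card_insert_of_notMem (by simp [Ne.symm hw3]), Finset.card_singleton]
      refine h3' {u, v, w} ?_ hcard
      rw [mem_stableSets_iff]
      intro a ha b hb
      simp only [Finset.mem_insert, Finset.mem_singleton] at ha hb
      rcases ha with rfl | rfl | rfl <;> rcases hb with rfl | rfl | rfl <;>
        first
          | exact G.irrefl
          | exact hadj
          | exact fun h => hadj h.symm
          | exact hw2
          | exact fun h => hw2 h.symm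
          | exact hw4
          | exact fun h => hw4 h.symm
    calc d u + d v = (N u ∪ N v).card := (Finset.card_union_of_disjoint hdis).symm
      _ ≤ n := Finset.card_le_univ _
  set S : Finset (V × V) := Finset.univ.filter (fun p => p.1 ≠ p.2 ∧ ¬G.Adj p.1 p.2) with hS
  have memS : ∀ p : V × V, p ∈ S ↔ p.1 ≠ p.2 ∧ ¬G.Adj p.1 p.2 := by
    intro p; simp [hS]
  have fib1 : ∀ u : V, (S.filter (fun p => p.1 = u)).card = d u := by
    intro u
    have himg : S.filter (fun p => p.1 = u) = (N u).image (fun w => (u, w)) := by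
      ext p
      simp only [Finset.mem_filter, Finset.mem_image]
      constructor
      · rintro ⟨hpS, hp1⟩
        rw [memS] at hpS
        refine ⟨p.2, ?_, ?_⟩
        · rw [memN]
          refine ⟨fun h => hpS.1 (hp1.trans h.symm), ?_⟩
          rw [← hp1]; exact hpS.2
        · exact Prod.ext hp1.symm rfl
      · rintro ⟨w, hw, rfl⟩
        rw [memN] at hw
        exact ⟨(memS _).mpr ⟨Ne.symm hw.1, hw.2⟩, rfl⟩
    rw [himg, Finset.card_image_of_injective _ (fun a b h => (Prod.mk.injEq u a u b ▸ h).2)]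
  have fib2 : ∀ u : V, (S.filter (fun p => p.2 = u)).card = d u := by
    intro u
    have himg : S.filter (fun p => p.2 = u) = (N u).image (fun w => (w, u)) := by
      ext p
      simp only [Finset.mem_filter, Finset.mem_image]
      constructor
      · rintro ⟨hpS, hp1⟩
        rw [memS] at hpS
        refine ⟨p.1, ?_, ?_⟩
        · rw [memN]
          refine ⟨fun h => hpS.1 (h.trans hp1.symm), ?_⟩
          rw [← hp1]; exact fun h => hpS.2 h.symm
        · exact Prod.ext rfl hp1.symm
      · rintro ⟨w, hw, rfl⟩
        rw [memN] at hw
        exact ⟨(memS _).mpr ⟨hw.1, fun h => hw.2 h.symm⟩, rfl⟩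
    rw [himg, Finset.card_image_of_injective _ (fun a b h => (Prod.mk.injEq a u b u ▸ h).1)]
  have hS1 : S.card = ∑ v, d v := by
    rw [Finset.card_eq_sum_card_fiberwise (f := Prod.fst) (t := Finset.univ)
      (fun x _ => Finset.mem_univ _)]
    exact Finset.sum_congr rfl fun u _ => fib1 u
  have hS3 : ∑ p ∈ S, d p.1 = ∑ v, d v * d v := by
    rw [← Finset.sum_fiberwise_of_maps_to (t := (Finset.univ : Finset V)) (g := Prod.fst)
      (fun x _ => Finset.mem_univ _) (fun p : V × V => d p.1)]
    refine Finset.sum_congr rfl fun u _ => ?_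
    rw [Finset.sum_congr rfl (fun p hp => ?_), Finset.sum_const, fib1 u, smul_eq_mul]
    simp only [Finset.mem_filter] at hp
    rw [hp.2]
  have hS4 : ∑ p ∈ S, d p.2 = ∑ v, d v * d v := by
    rw [← Finset.sum_fiberwise_of_maps_to (t := (Finset.univ : Finset V)) (g := Prod.snd)
      (fun x _ => Finset.mem_univ _) (fun p : V × V => d p.2)]
    refine Finset.sum_congr rfl fun u _ => ?_
    rw [Finset.sum_congr rfl (fun p hp => ?_), Finset.sum_const, fib2 u, smul_eq_mul]
    simp only [Finset.mem_filter] at hp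
    rw [hp.2]
  -- S.card = 2 * m
  have hS2 : S.card = 2 * m := by
    rw [Finset.card_eq_sum_card_fiberwise
      (f := fun p : V × V => ({p.1, p.2} : Finset V))
      (t := (stableSets G).filter (fun s => s.card = 2)) ?_]
    · rw [Finset.sum_congr rfl (fun t ht => ?_), Finset.sum_const, smul_eq_mul, mul_comm]
      · rfl
      · -- each fiber has 2 elements
        simp only [Finset.mem_filter] at ht
        obtain ⟨hts, htc⟩ := ht
        obtain ⟨a, b, hab, rfl⟩ := Finset.card_eq_two.mp htc
        have hna : ¬G.Adj a b := by
          rw [mem_stableSets_iff] at hts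
          exact hts a (by simp) b (by simp)
        have : S.filter (fun p => ({p.1, p.2} : Finset V) = {a, b}) =
            {(a, b), (b, a)} := by
          ext p
          simp only [Finset.mem_filter, Finset.mem_insert, Finset.mem_singleton]
          constructor
          · rintro ⟨hpS, hpe⟩
            rw [memS] at hpS
            have h1 : p.1 ∈ ({a, b} : Finset V) := by rw [← hpe]; simp
            have h2 : p.2 ∈ ({a, b} : Finset V) := by rw [← hpe]; simp
            simp only [Finset.mem_insert, Finset.mem_singleton] at h1 h2
            rcases h1 with h1 | h1 <;> rcases h2 with h2 | h2
            · exact absurd (h1.trans h2.symm) hpS.1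
            · exact Or.inl (Prod.ext h1 h2)
            · exact Or.inr (Prod.ext h1 h2)
            · exact absurd (h1.trans h2.symm) hpS.1
          · rintro (rfl | rfl)
            · exact ⟨(memS _).mpr ⟨hab, hna⟩, rfl⟩
            · refine ⟨(memS _).mpr ⟨Ne.symm hab, fun h => hna h.symm⟩, ?_⟩
              simp [Finset.pair_comm]
        rw [this, Finset.card_insert_of_notMem (by simp [Prod.ext_iff, hab]),
          Finset.card_singleton]
    · intro p hp
      rw [Finset.mem_coe, memS] at hp
      simp only [Finset.mem_coe, Finset.mem_filter]
      refine ⟨(mem_stableSets_iff G _).mpr ?_, Finset.card_pair hp.1⟩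
      intro x hx y hy
      simp only [Finset.mem_insert, Finset.mem_singleton] at hx hy
      rcases hx with rfl | rfl <;> rcases hy with rfl | rfl
      · exact G.irrefl
      · exact hp.2
      · exact fun h => hp.2 h.symm
      · exact G.irrefl
  -- main counting inequality
  have main : 2 * (∑ v, d v * d v) ≤ (∑ v, d v) * n := by
    have : ∑ p ∈ S, (d p.1 + d p.2) ≤ ∑ _p ∈ S, n := by
      refine Finset.sum_le_sum fun p hp => ?_
      rw [memS] at hp
      exact key2 p.1 p.2 hp.1 hp.2
    rw [Finset.sum_add_distrib, hS3, hS4, Finset.sum_const, smul_eq_mul, hS1] at this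
    omega
  have cauchy : (∑ v, d v)^2 ≤ n * ∑ v, d v^2 := by
    have := sq_sum_le_card_mul_sum_sq (s := (Finset.univ : Finset V)) (f := d)
    simpa [hn, Finset.card_univ] using this
  have hsum : ∑ v, d v = 2 * m := by rw [← hS1, hS2]
  -- combine
  rcases Nat.eq_zero_or_pos m with hm0 | hm0
  · rw [hm0]; positivity
  have hfinal : (4 * m) * (2 * m) ≤ n^2 * (2 * m) := by
    have e : ∑ v, d v * d v = ∑ v, d v ^ 2 := by
      refine Finset.sum_congr rfl fun v _ => (sq (d v)).symm
    calc (4 * m) * (2 * m) = 2 * (2 * m)^2 := by ring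
      _ = 2 * (∑ v, d v)^2 := by rw [hsum]
      _ ≤ 2 * (n * ∑ v, d v^2) := by omega
      _ = n * (2 * (∑ v, d v * d v)) := by rw [e]; ring
      _ ≤ n * ((∑ v, d v) * n) := Nat.mul_le_mul_left _ main
      _ = n^2 * (2 * m) := by rw [hsum]; ring
  exact Nat.le_of_mul_le_mul_right hfinal (by omega)

lemma card_eq_sum_slices (s : Finset V) :
    s.card = ∑ c : G.ConnectedComponent, (s.subtype (· ∈ c.supp)).card := by
  rw [Finset.card_eq_sum_card_fiberwise
    (f := fun v => G.connectedComponentMk v) (t := Finset.univ) (fun x _ => Finset.mem_univ _)]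
  refine Finset.sum_congr rfl fun c _ => ?_
  rw [Finset.card_subtype]
  congr 1
  apply Finset.filter_congr
  intro v _
  simp [SimpleGraph.ConnectedComponent.mem_supp_iff]

lemma indepPoly_prod_components :
    indepPoly G = ∏ c : G.ConnectedComponent, indepPoly (G.induce c.supp) := by
  have hRHS : ∏ c : G.ConnectedComponent, indepPoly (G.induce c.supp)
      = ∑ g ∈ Finset.univ.pi (fun c : G.ConnectedComponent => stableSets (G.induce c.supp)),
          ∏ c ∈ Finset.univ.attach, (X : Polynomial ℤ) ^ ((g c.1 c.2).card) := by
    simp only [indepPoly]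
    rw [Finset.prod_sum]
  rw [hRHS, indepPoly]
  refine Finset.sum_nbij'
    (fun s => fun c _ => s.subtype (· ∈ c.supp))
    (fun g => Finset.univ.filter (fun v =>
      (⟨v, SimpleGraph.ConnectedComponent.connectedComponentMk_mem⟩ : ((G.connectedComponentMk v).supp : Set V)) ∈
        g (G.connectedComponentMk v) (Finset.mem_univ _)))
    ?_ ?_ ?_ ?_ ?_
  · -- hi : toPi s ∈ pi
    intro s hs
    rw [Finset.mem_pi]
    intro c _
    rw [mem_stableSets_iff]
    rintro ⟨v, hv⟩ hvm ⟨w, hw⟩ hwm hadj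
    rw [Finset.mem_subtype] at hvm hwm
    rw [mem_stableSets_iff] at hs
    exact hs v hvm w hwm hadj
  · -- hj : fromPi g ∈ stableSets G
    intro g hg
    have transport : ∀ (c c' : G.ConnectedComponent) (h : c = c') (v : V)
        (hv : v ∈ c.supp) (hv' : v ∈ c'.supp),
        (⟨v, hv⟩ : (c.supp : Set V)) ∈ g c (Finset.mem_univ _) →
        (⟨v, hv'⟩ : (c'.supp : Set V)) ∈ g c' (Finset.mem_univ _) := by
      rintro c c' rfl v hv hv' h
      exact h
    rw [mem_stableSets_iff]
    intro v hv w hw hadj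
    simp only [Finset.mem_filter, Finset.mem_univ, true_and] at hv hw
    have heq : G.connectedComponentMk w = G.connectedComponentMk v :=
      (SimpleGraph.ConnectedComponent.connectedComponentMk_eq_of_adj hadj).symm
    have hwsupp : w ∈ (G.connectedComponentMk v).supp := by
      rw [SimpleGraph.ConnectedComponent.mem_supp_iff]
      exact heq
    have hw' := transport _ _ heq w SimpleGraph.ConnectedComponent.connectedComponentMk_mem hwsupp hw
    have hstab := (mem_stableSets_iff _ _).mp
      (Finset.mem_pi.mp hg (G.connectedComponentMk v) (Finset.mem_univ _))
    exact hstab ⟨v, SimpleGraph.ConnectedComponent.connectedComponentMk_mem⟩ hv ⟨w, hwsupp⟩ hw' hadj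
  · -- left_inv
    intro s hs
    ext v
    simp [Finset.mem_subtype]
  · -- right_inv
    intro g hg
    have transport : ∀ (c c' : G.ConnectedComponent) (h : c = c') (v : V)
        (hv : v ∈ c.supp) (hv' : v ∈ c'.supp),
        (⟨v, hv⟩ : (c.supp : Set V)) ∈ g c (Finset.mem_univ _) →
        (⟨v, hv'⟩ : (c'.supp : Set V)) ∈ g c' (Finset.mem_univ _) := by
      rintro c c' rfl v hv hv' h
      exact h
    funext c hc
    ext ⟨v, hv⟩
    rw [Finset.mem_subtype]
    simp only [Finset.mem_filter, Finset.mem_univ, true_and]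
    have hceq : G.connectedComponentMk v = c :=
      (SimpleGraph.ConnectedComponent.mem_supp_iff _ _).mp hv
    constructor
    · intro h
      exact transport _ _ hceq v SimpleGraph.ConnectedComponent.connectedComponentMk_mem hv h
    · intro h
      exact transport _ _ hceq.symm v hv SimpleGraph.ConnectedComponent.connectedComponentMk_mem h
  · -- values agree
    intro s hs
    rw [Finset.prod_pow_eq_pow_sum]
    congr 1
    rw [card_eq_sum_slices G s,
      ← Finset.sum_attach Finset.univ (fun c : G.ConnectedComponent => (s.subtype (· ∈ c.supp)).card)]

lemma indepPoly_of_alpha_two {W : Type*} [Fintype W] (H : SimpleGraph W) (h : indepNum H = 2) :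
    indepPoly H = 1 + Polynomial.C (Fintype.card W : ℤ) * X
      + Polynomial.C (sCount H 2 : ℤ) * X^2 := by
  ext k
  rw [coeff_indepPoly]
  match k with
  | 0 => simp [sCount_zero]
  | 1 => simp [sCount_one, coeff_one]
  | 2 => simp [coeff_X_pow, coeff_one]
  | (k+3) =>
    rw [sCount_eq_zero_of_lt H (by omega : indepNum H < k+3)]
    simp [coeff_X_pow, coeff_one]

end Aux

open Classical in
/-- If every connected component of `G` has independence number `2`, then the
independence polynomial of `G` has only real roots, and hence is log-concave and
unimodal. -/
theorem realRooted_of_components_alpha_two {V : Type*} [Fintype V] (G : SimpleGraph V)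
    (hcomp : ∀ c : G.ConnectedComponent, indepNum (G.induce c.supp) = 2) :
    (∀ z : ℂ, Polynomial.aeval z (indepPoly G) = 0 → z.im = 0) ∧
      PolyLogConcave (indepPoly G) ∧ PolyUnimodal (indepPoly G) := by
  classical
  have hprod := indepPoly_prod_components G
  have hq : ∀ c : G.ConnectedComponent, indepPoly (G.induce c.supp) =
      1 + Polynomial.C ((Fintype.card c.supp : ℤ)) * Polynomial.X
        + Polynomial.C ((sCount (G.induce c.supp) 2 : ℤ)) * Polynomial.X^2 :=
    fun c => indepPoly_of_alpha_two _ (hcomp c)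
  have hineq : ∀ c : G.ConnectedComponent,
      4 * sCount (G.induce c.supp) 2 ≤ (Fintype.card c.supp)^2 := fun c =>
    mantel_bound _ (sCount_eq_zero_of_lt _ (by rw [hcomp c]; omega))
  have hineqR : ∀ c : G.ConnectedComponent,
      4 * (sCount (G.induce c.supp) 2 : ℝ) ≤ (Fintype.card c.supp : ℝ)^2 := by
    intro c
    exact_mod_cast hineq c
  choose r s hr hs hsum hprodrs using fun c : G.ConnectedComponent =>
    quad_factor_exists (Fintype.card c.supp : ℝ) (sCount (G.induce c.supp) 2 : ℝ)
      (by positivity) (by positivity) (hineqR c)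
  have hmap : (indepPoly G).map (Int.castRingHom ℝ) =
      ∏ c : G.ConnectedComponent,
        ((1 + Polynomial.C (r c) * Polynomial.X) * (1 + Polynomial.C (s c) * Polynomial.X)) := by
    rw [hprod, Polynomial.map_prod]
    refine Finset.prod_congr rfl fun c _ => ?_
    rw [hq c, ← quad_poly_factor _ _ _ _ (hsum c) (hprodrs c)]
    simp only [Polynomial.map_add, Polynomial.map_mul, Polynomial.map_one,
      Polynomial.map_pow, Polynomial.map_C, Polynomial.map_X, Polynomial.map_ofNat]
    norm_cast
  have hgood : GoodP ((indepPoly G).map (Int.castRingHom ℝ)) := by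
    rw [hmap]; exact goodP_prod _ r s (fun c _ => hr c) (fun c _ => hs c)
  have hcoeff : ∀ j, ((indepPoly G).map (Int.castRingHom ℝ)).coeff j
      = ((indepPoly G).coeff j : ℝ) := fun j => Polynomial.coeff_map _ _
  refine ⟨?_, ?_, ?_⟩
  · intro z hz
    rw [hprod, map_prod] at hz
    obtain ⟨c, -, hc⟩ := Finset.prod_eq_zero_iff.mp hz
    rw [hq c] at hc
    simp only [map_add, map_mul, map_one, map_pow, Polynomial.aeval_C, Polynomial.aeval_X,
      Polynomial.aeval_one] at hc
    apply quad_im_zero (Fintype.card c.supp : ℝ) (sCount (G.induce c.supp) 2 : ℝ)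
      (by positivity) (hineqR c) z
    push_cast at hc ⊢
    convert hc using 2
  · intro i hi
    have h := hgood.2.2 (i-1)
    rw [hcoeff, hcoeff, hcoeff] at h
    have e1 : i - 1 + 1 = i := by omega
    have e2 : i - 1 + 2 = i + 1 := by omega
    rw [e1, e2] at h
    exact_mod_cast h
  · obtain ⟨k, h1, h2⟩ := hgood.unimodal
    refine ⟨k, fun i j hij hjk => ?_, fun i j hki hij => ?_⟩
    · have := h1 i j hij hjk
      rw [hcoeff, hcoeff] at this
      exact_mod_cast this
    · have := h2 i j hki hij
      rw [hcoeff, hcoeff] at this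
      exact_mod_cast this
end

section
/- For every integer k ≥ 4, there exists a finite connected well-covered simple graph G with α(G) = k whose independence polynomial is not unimodal. -/
/-- A graph is well-covered if every maximal stable set is a maximum stable set. -/
def WellCovered {V : Type*} [Fintype V] (G : SimpleGraph V) : Prop :=
  ∀ s ∈ stableSets G, (∀ t ∈ stableSets G, s ⊆ t → s = t) → s.card = indepNum G

set_option linter.unusedSectionVars false
open Polynomial Finset

section Basic
variable {V : Type*} [Fintype V] {G : SimpleGraph V}

lemma mem_stableSets {s : Finset V} :
    s ∈ stableSets G ↔ ∀ v ∈ s, ∀ w ∈ s, ¬ G.Adj v w := by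
  simp [stableSets]

lemma empty_mem_stableSets (G : SimpleGraph V) : ∅ ∈ stableSets G := by
  simp [mem_stableSets]

lemma stableSets_nonempty (G : SimpleGraph V) : (stableSets G).Nonempty :=
  ⟨∅, empty_mem_stableSets G⟩

lemma exists_card_eq_indepNum (G : SimpleGraph V) :
    ∃ s ∈ stableSets G, s.card = indepNum G := by
  obtain ⟨b, hb, h⟩ := Finset.exists_mem_eq_sup _ (stableSets_nonempty G) Finset.card
  exact ⟨b, hb, h.symm⟩

lemma card_le_indepNum {s : Finset V} (hs : s ∈ stableSets G) : s.card ≤ indepNum G :=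
  Finset.le_sup hs
end Basic

section DUnion
variable {V W : Type*} [Fintype V] [Fintype W]

def dUnion (G : SimpleGraph V) (H : SimpleGraph W) : SimpleGraph (V ⊕ W) where
  Adj a b := match a, b with
    | .inl a, .inl b => G.Adj a b
    | .inr a, .inr b => H.Adj a b
    | _, _ => False
  symm := ⟨by rintro (a|a) (b|b) h <;> simp_all <;> exact h.symm⟩
  loopless := ⟨by rintro (a|a) h <;> simp_all⟩

variable {G : SimpleGraph V} {H : SimpleGraph W}

@[simp] lemma dUnion_adj_ll {a b : V} : (dUnion G H).Adj (.inl a) (.inl b) ↔ G.Adj a b := Iff.rfl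
@[simp] lemma dUnion_adj_rr {a b : W} : (dUnion G H).Adj (.inr a) (.inr b) ↔ H.Adj a b := Iff.rfl
@[simp] lemma dUnion_adj_lr {a : V} {b : W} : ¬ (dUnion G H).Adj (.inl a) (.inr b) := fun h => h
@[simp] lemma dUnion_adj_rl {a : W} {b : V} : ¬ (dUnion G H).Adj (.inr a) (.inl b) := fun h => h

lemma stable_dUnion_iff {u : Finset (V ⊕ W)} :
    u ∈ stableSets (dUnion G H) ↔ u.toLeft ∈ stableSets G ∧ u.toRight ∈ stableSets H := by
  simp only [mem_stableSets, Finset.mem_toLeft, Finset.mem_toRight]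
  constructor
  · exact fun h => ⟨fun v hv w hw => h _ hv _ hw, fun v hv w hw => h _ hv _ hw⟩
  · rintro ⟨hL, hR⟩ (v|v) hv (w|w) hw
    exacts [hL v hv w hw, dUnion_adj_lr, dUnion_adj_rl, hR v hv w hw]

lemma indepPoly_dUnion : indepPoly (dUnion G H) = indepPoly G * indepPoly H := by
  rw [indepPoly, indepPoly, indepPoly, Finset.sum_mul_sum, ← Finset.sum_product']
  refine (Finset.sum_nbij' (fun u => (u.toLeft, u.toRight)) (fun p => p.1.disjSum p.2)
    ?_ ?_ ?_ ?_ ?_)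
  · intro u hu
    have := stable_dUnion_iff.1 hu
    simp [Finset.mem_product, this.1, this.2]
  · intro p hp
    simp only [Finset.mem_product] at hp
    exact stable_dUnion_iff.2 (by simp [hp.1, hp.2])
  · intro u _; exact toLeft_disjSum_toRight
  · intro p _; simp
  · intro u _
    rw [← pow_add, ← card_toLeft_add_card_toRight]

lemma indepNum_dUnion : indepNum (dUnion G H) = indepNum G + indepNum H := by
  apply le_antisymm
  · refine Finset.sup_le fun u hu => ?_
    obtain ⟨h1, h2⟩ := stable_dUnion_iff.1 hu
    calc u.card = u.toLeft.card + u.toRight.card := card_toLeft_add_card_toRight.symm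
    _ ≤ _ := add_le_add (card_le_indepNum h1) (card_le_indepNum h2)
  · obtain ⟨s, hs, hcs⟩ := exists_card_eq_indepNum G
    obtain ⟨t, ht, hct⟩ := exists_card_eq_indepNum H
    have hst : s.disjSum t ∈ stableSets (dUnion G H) := stable_dUnion_iff.2 (by simp [hs, ht])
    calc indepNum G + indepNum H = (s.disjSum t).card := by rw [card_disjSum, hcs, hct]
    _ ≤ _ := card_le_indepNum hst

lemma wellCovered_dUnion (hG : WellCovered G) (hH : WellCovered H) :
    WellCovered (dUnion G H) := by
  intro u hu hmax
  obtain ⟨h1, h2⟩ := stable_dUnion_iff.1 hu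
  have hL : u.toLeft.card = indepNum G := by
    refine hG _ h1 fun t ht hsub => ?_
    have hstab : t.disjSum u.toRight ∈ stableSets (dUnion G H) :=
      stable_dUnion_iff.2 (by simp [ht, h2])
    have heq := hmax _ hstab (by
      conv_lhs => rw [← toLeft_disjSum_toRight (u := u)]
      exact Finset.disjSum_mono hsub Finset.Subset.rfl)
    have := congrArg Finset.toLeft heq
    simpa using this
  have hR : u.toRight.card = indepNum H := by
    refine hH _ h2 fun t ht hsub => ?_
    have hstab : u.toLeft.disjSum t ∈ stableSets (dUnion G H) :=
      stable_dUnion_iff.2 (by simp [ht, h1])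
    have heq := hmax _ hstab (by
      conv_lhs => rw [← toLeft_disjSum_toRight (u := u)]
      exact Finset.disjSum_mono Finset.Subset.rfl hsub)
    have := congrArg Finset.toRight heq
    simpa using this
  rw [← card_toLeft_add_card_toRight, hL, hR, indepNum_dUnion]

end DUnion

section Join
variable {V W : Type*} [Fintype V] [Fintype W]

def join (G : SimpleGraph V) (H : SimpleGraph W) : SimpleGraph (V ⊕ W) where
  Adj a b := match a, b with
    | .inl a, .inl b => G.Adj a b
    | .inr a, .inr b => H.Adj a b
    | _, _ => True
  symm := ⟨by rintro (a|a) (b|b) h <;> simp_all <;> exact h.symm⟩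
  loopless := ⟨by rintro (a|a) h <;> simp_all⟩

variable {G : SimpleGraph V} {H : SimpleGraph W}

@[simp] lemma join_adj_ll {a b : V} : (join G H).Adj (.inl a) (.inl b) ↔ G.Adj a b := Iff.rfl
@[simp] lemma join_adj_rr {a b : W} : (join G H).Adj (.inr a) (.inr b) ↔ H.Adj a b := Iff.rfl
@[simp] lemma join_adj_lr {a : V} {b : W} : (join G H).Adj (.inl a) (.inr b) := trivial
@[simp] lemma join_adj_rl {a : W} {b : V} : (join G H).Adj (.inr a) (.inl b) := trivial

lemma stable_join_iff {u : Finset (V ⊕ W)} :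
    u ∈ stableSets (join G H) ↔
      (u.toLeft ∈ stableSets G ∧ u.toRight = ∅) ∨
      (u.toLeft = ∅ ∧ u.toRight ∈ stableSets H) := by
  simp only [mem_stableSets, Finset.mem_toLeft, Finset.mem_toRight]
  constructor
  · intro h
    rcases Finset.eq_empty_or_nonempty u.toRight with hR | ⟨w, hw⟩
    · exact Or.inl ⟨fun v hv w hw => h _ hv _ hw, hR⟩
    · rcases Finset.eq_empty_or_nonempty u.toLeft with hL | ⟨v, hv⟩
      · exact Or.inr ⟨hL, fun v hv w hw => h _ hv _ hw⟩
      · exact absurd (h _ (Finset.mem_toLeft.1 hv) _ (Finset.mem_toRight.1 hw)) (by simp)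
  · rintro (⟨hL, hR⟩ | ⟨hL, hR⟩) (v|v) hv (w|w) hw
    · exact hL v hv w hw
    · exact absurd (Finset.mem_toRight.2 hw) (by simp [hR])
    · exact absurd (Finset.mem_toRight.2 hv) (by simp [hR])
    · exact absurd (Finset.mem_toRight.2 hv) (by simp [hR])
    · exact absurd (Finset.mem_toLeft.2 hv) (by simp [hL])
    · exact absurd (Finset.mem_toLeft.2 hv) (by simp [hL])
    · exact absurd (Finset.mem_toLeft.2 hw) (by simp [hL])
    · exact hR v hv w hw

lemma indepPoly_join : indepPoly (join G H) = indepPoly G + indepPoly H - 1 := by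
  classical
  rw [indepPoly]
  rw [← Finset.sum_filter_add_sum_filter_not (stableSets (join G H)) (fun u => u.toRight = ∅)]
  have e1 : ∑ u ∈ (stableSets (join G H)).filter (fun u => u.toRight = ∅),
      (X : ℤ[X]) ^ u.card = indepPoly G := by
    rw [indepPoly]
    refine Finset.sum_nbij' (fun u => u.toLeft) (fun s => s.disjSum ∅) ?_ ?_ ?_ ?_ ?_
    · intro u hu
      rw [Finset.mem_filter] at hu
      rcases stable_join_iff.1 hu.1 with ⟨h, _⟩ | ⟨h, _⟩
      · exact h
      · show u.toLeft ∈ stableSets G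
        rw [h]; exact empty_mem_stableSets G
    · intro s hs
      rw [Finset.mem_filter]
      refine ⟨stable_join_iff.2 (Or.inl ⟨?_, ?_⟩), ?_⟩
      · rw [Finset.toLeft_disjSum]; exact hs
      · rw [Finset.toRight_disjSum]
      · rw [Finset.toRight_disjSum]
    · intro u hu
      rw [Finset.mem_filter] at hu
      conv_rhs => rw [← toLeft_disjSum_toRight (u := u)]
      rw [hu.2]
    · intro s _; exact Finset.toLeft_disjSum
    · intro u hu
      rw [Finset.mem_filter] at hu
      congr 1
      rw [← card_toLeft_add_card_toRight (u := u), hu.2]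
      simp
  have e2 : ∑ u ∈ (stableSets (join G H)).filter (fun u => ¬ u.toRight = ∅),
      (X : ℤ[X]) ^ u.card = indepPoly H - 1 := by
    have e3 : ∑ u ∈ (stableSets (join G H)).filter (fun u => ¬ u.toRight = ∅),
        (X : ℤ[X]) ^ u.card = ∑ t ∈ (stableSets H).erase ∅, (X : ℤ[X]) ^ t.card := by
      refine Finset.sum_nbij' (fun u => u.toRight) (fun t => Finset.disjSum ∅ t) ?_ ?_ ?_ ?_ ?_
      · intro u hu
        rw [Finset.mem_filter] at hu
        rcases stable_join_iff.1 hu.1 with ⟨_, h⟩ | ⟨_, h⟩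
        · exact absurd h hu.2
        · exact Finset.mem_erase.2 ⟨hu.2, h⟩
      · intro t ht
        rw [Finset.mem_erase] at ht
        rw [Finset.mem_filter]
        refine ⟨stable_join_iff.2 (Or.inr ⟨?_, ?_⟩), ?_⟩
        · rw [Finset.toLeft_disjSum]
        · rw [Finset.toRight_disjSum]; exact ht.2
        · rw [Finset.toRight_disjSum]; exact ht.1
      · intro u hu
        rw [Finset.mem_filter] at hu
        rcases stable_join_iff.1 hu.1 with ⟨_, h⟩ | ⟨h, _⟩
        · exact absurd h hu.2
        · conv_rhs => rw [← toLeft_disjSum_toRight (u := u)]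
          rw [h]
      · intro t _; exact Finset.toRight_disjSum
      · intro u hu
        rw [Finset.mem_filter] at hu
        rcases stable_join_iff.1 hu.1 with ⟨_, h⟩ | ⟨h, _⟩
        · exact absurd h hu.2
        · congr 1
          rw [← card_toLeft_add_card_toRight (u := u), h]
          simp
    rw [e3, indepPoly, ← Finset.add_sum_erase _ _ (empty_mem_stableSets H)]
    simp
  rw [e1, e2]; ring

lemma indepNum_join (hGH : indepNum G = indepNum H) : indepNum (join G H) = indepNum G := by
  apply le_antisymm
  · refine Finset.sup_le fun u hu => ?_
    rw [← card_toLeft_add_card_toRight (u := u)]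
    rcases stable_join_iff.1 hu with ⟨h, h2⟩ | ⟨h2, h⟩
    · rw [h2]; simpa using card_le_indepNum h
    · rw [h2]; simpa [hGH] using card_le_indepNum h
  · obtain ⟨s, hs, hcs⟩ := exists_card_eq_indepNum G
    have : s.disjSum ∅ ∈ stableSets (join G H) :=
      stable_join_iff.2 (Or.inl ⟨by rw [Finset.toLeft_disjSum]; exact hs, by rw [Finset.toRight_disjSum]⟩)
    calc indepNum G = (s.disjSum ∅).card := by simp [hcs]
    _ ≤ _ := card_le_indepNum this

lemma wellCovered_join (hG : WellCovered G) (hH : WellCovered H)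
    (hGH : indepNum G = indepNum H) : WellCovered (join G H) := by
  intro u hu hmax
  rw [indepNum_join hGH]
  rcases stable_join_iff.1 hu with ⟨h, h2⟩ | ⟨h2, h⟩
  · have hL : u.toLeft.card = indepNum G := by
      refine hG _ h fun t ht hsub => ?_
      have hstab : t.disjSum ∅ ∈ stableSets (join G H) :=
        stable_join_iff.2 (Or.inl ⟨by rw [Finset.toLeft_disjSum]; exact ht, by rw [Finset.toRight_disjSum]⟩)
      have heq := hmax _ hstab (by
        conv_lhs => rw [← toLeft_disjSum_toRight (u := u), h2]
        exact Finset.disjSum_mono hsub Finset.Subset.rfl)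
      have := congrArg Finset.toLeft heq
      rw [Finset.toLeft_disjSum] at this
      exact this
    rw [← card_toLeft_add_card_toRight (u := u), h2, hL]; simp
  · have hR : u.toRight.card = indepNum H := by
      refine hH _ h fun t ht hsub => ?_
      have hstab : Finset.disjSum ∅ t ∈ stableSets (join G H) :=
        stable_join_iff.2 (Or.inr ⟨by rw [Finset.toLeft_disjSum], by rw [Finset.toRight_disjSum]; exact ht⟩)
      have heq := hmax _ hstab (by
        conv_lhs => rw [← toLeft_disjSum_toRight (u := u), h2]
        exact Finset.disjSum_mono Finset.Subset.rfl hsub)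
      have := congrArg Finset.toRight heq
      rw [Finset.toRight_disjSum] at this
      exact this
    rw [← card_toLeft_add_card_toRight (u := u), h2, hR, hGH]; simp

lemma connected_join [Nonempty V] [Nonempty W] : (join G H).Connected := by
  rw [SimpleGraph.connected_iff]
  refine ⟨fun a b => ?_, inferInstance⟩
  obtain ⟨v⟩ := ‹Nonempty V›
  obtain ⟨w⟩ := ‹Nonempty W›
  have hl : ∀ x : V, (join G H).Reachable (.inl x) (.inr w) :=
    fun x => (SimpleGraph.Adj.reachable (by simp))
  have hr : ∀ y : W, (join G H).Reachable (.inr y) (.inl v) :=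
    fun y => (SimpleGraph.Adj.reachable (by simp))
  rcases a with a | a <;> rcases b with b | b
  · exact (hl a).trans (hl b).symm
  · exact SimpleGraph.Adj.reachable (by simp)
  · exact SimpleGraph.Adj.reachable (by simp)
  · exact (hr a).trans (hr b).symm
end Join

section Bases
variable {V : Type*} [Fintype V]

lemma stableSets_bot : stableSets (⊥ : SimpleGraph V) = Finset.univ := by
  ext s; simp [mem_stableSets]

lemma indepPoly_bot : indepPoly (⊥ : SimpleGraph V) = (X + 1) ^ (Fintype.card V) := by
  classical
  rw [indepPoly, stableSets_bot]
  calc ∑ s : Finset V, (X : ℤ[X]) ^ s.card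
      = ∑ t ∈ Finset.univ.powerset, (∏ _i ∈ t, (X : ℤ[X])) * ∏ _i ∈ Finset.univ \ t, (1 : ℤ[X]) := by
        rw [Finset.powerset_univ]
        exact Finset.sum_congr rfl fun t _ => by simp
    _ = ∏ _i : V, ((X : ℤ[X]) + 1) := (Finset.prod_add _ _ _).symm
    _ = (X + 1) ^ Fintype.card V := by
        rw [Finset.prod_const, Finset.card_univ]

lemma indepNum_bot : indepNum (⊥ : SimpleGraph V) = Fintype.card V := by
  apply le_antisymm
  · exact Finset.sup_le fun u _ => Finset.card_le_univ u
  · rw [← Finset.card_univ]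
    exact card_le_indepNum (by rw [stableSets_bot]; exact Finset.mem_univ _)

lemma wellCovered_bot : WellCovered (⊥ : SimpleGraph V) := by
  intro s hs hmax
  have : s = Finset.univ := hmax _ (by rw [stableSets_bot]; exact Finset.mem_univ _)
    (Finset.subset_univ s)
  rw [this, Finset.card_univ, indepNum_bot]

lemma stable_top_iff {s : Finset V} : s ∈ stableSets (⊤ : SimpleGraph V) ↔ s.card ≤ 1 := by
  rw [mem_stableSets, Finset.card_le_one]
  constructor
  · intro h a ha b hb
    by_contra hne
    exact h a ha b hb ((SimpleGraph.top_adj a b).2 hne)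
  · intro h v hv w hw hadj
    exact hadj.ne (h v hv w hw)

lemma stableSets_top [DecidableEq V] : stableSets (⊤ : SimpleGraph V) =
    insert ∅ (Finset.univ.image fun v : V => {v}) := by
  ext s
  rw [stable_top_iff, Finset.mem_insert, Finset.mem_image]
  constructor
  · intro h
    rcases s.eq_empty_or_nonempty with h0 | ⟨a, ha⟩
    · exact Or.inl h0
    · refine Or.inr ⟨a, Finset.mem_univ a, ?_⟩
      exact (Finset.eq_singleton_iff_unique_mem.2 ⟨ha, fun b hb =>
        Finset.card_le_one.1 h b hb a ha⟩).symm
  · rintro (rfl | ⟨a, -, rfl⟩) <;> simp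

lemma indepPoly_top [DecidableEq V] : indepPoly (⊤ : SimpleGraph V) = 1 + (Fintype.card V : ℤ[X]) * X := by
  classical
  rw [indepPoly, stableSets_top, Finset.sum_insert (by simp), Finset.sum_image
    (fun a _ b _ h => Finset.singleton_injective h)]
  simp [Finset.card_univ, mul_comm]

lemma indepNum_top [Nonempty V] : indepNum (⊤ : SimpleGraph V) = 1 := by
  apply le_antisymm
  · exact Finset.sup_le fun u hu => stable_top_iff.1 hu
  · obtain ⟨v⟩ := ‹Nonempty V›
    have : ({v} : Finset V) ∈ stableSets (⊤ : SimpleGraph V) := stable_top_iff.2 (by simp)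
    simpa using card_le_indepNum this

lemma wellCovered_top [Nonempty V] : WellCovered (⊤ : SimpleGraph V) := by
  intro s hs hmax
  rw [indepNum_top]
  rcases s.eq_empty_or_nonempty with rfl | hne
  · obtain ⟨v⟩ := ‹Nonempty V›
    have := hmax {v} (stable_top_iff.2 (by simp)) (Finset.empty_subset _)
    exact absurd this.symm (Finset.singleton_ne_empty v)
  · exact le_antisymm (stable_top_iff.1 hs) (Finset.one_le_card.2 hne)

end Bases

section MapE
variable {V W : Type*} [Fintype V] [Fintype W] (e : V ≃ W) (G : SimpleGraph V)

def mapE : SimpleGraph W where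
  Adj x y := G.Adj (e.symm x) (e.symm y)
  symm := ⟨fun x y h => h.symm⟩
  loopless := ⟨fun x h => G.irrefl h⟩

variable {e G}

@[simp] lemma mapE_adj {x y : W} : (mapE e G).Adj x y ↔ G.Adj (e.symm x) (e.symm y) := Iff.rfl

lemma stable_mapE_iff {s : Finset V} :
    s.map e.toEmbedding ∈ stableSets (mapE e G) ↔ s ∈ stableSets G := by
  simp only [mem_stableSets, Finset.mem_map_equiv, mapE_adj]
  constructor
  · intro h v hv w hw
    simpa using h (e v) (by simpa using hv) (e w) (by simpa using hw)
  · intro h x hx y hy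
    exact h _ hx _ hy

lemma stable_mapE_iff' {u : Finset W} :
    u ∈ stableSets (mapE e G) ↔ u.map e.symm.toEmbedding ∈ stableSets G := by
  simp only [mem_stableSets, Finset.mem_map_equiv, mapE_adj, Equiv.symm_symm]
  constructor
  · intro h v hv w hw
    simpa using h (e v) hv (e w) hw
  · intro h x hx y hy
    exact h _ (by simpa using hx) _ (by simpa using hy)

lemma indepPoly_mapE : indepPoly (mapE e G) = indepPoly G := by
  rw [indepPoly, indepPoly]
  refine Finset.sum_nbij' (fun u => u.map e.symm.toEmbedding) (fun s => s.map e.toEmbedding)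
    ?_ ?_ ?_ ?_ ?_
  · intro u hu; exact stable_mapE_iff'.1 hu
  · intro s hs; exact stable_mapE_iff.2 hs
  · intro u _; ext x; simp [Finset.mem_map_equiv]
  · intro s _; ext x; simp [Finset.mem_map_equiv]
  · intro u _; rw [Finset.card_map]

lemma indepNum_mapE : indepNum (mapE e G) = indepNum G := by
  apply le_antisymm
  · refine Finset.sup_le fun u hu => ?_
    rw [← Finset.card_map e.symm.toEmbedding]
    exact card_le_indepNum (stable_mapE_iff'.1 hu)
  · refine Finset.sup_le fun s hs => ?_
    rw [← Finset.card_map e.toEmbedding]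
    exact card_le_indepNum (stable_mapE_iff.2 hs)

lemma wellCovered_mapE (hG : WellCovered G) : WellCovered (mapE e G) := by
  intro u hu hmax
  rw [indepNum_mapE]
  have hs := stable_mapE_iff'.1 hu
  have key : (u.map e.symm.toEmbedding).card = indepNum G := by
    refine hG _ hs fun t ht hsub => ?_
    have h2 : u ⊆ t.map e.toEmbedding := by
      intro x hx
      rw [Finset.mem_map_equiv]
      exact hsub (by rw [Finset.mem_map_equiv]; simpa using hx)
    have h3 := hmax _ (stable_mapE_iff.2 ht) h2
    rw [h3]
    ext x; simp [Finset.mem_map_equiv]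
  rw [← key, Finset.card_map]

lemma connected_mapE (hG : G.Connected) : (mapE e G).Connected := by
  have iso : G ≃g (mapE e G) := ⟨e, by simp⟩
  exact iso.connected_iff.1 hG

end MapE

section Iterated

def CIter (N : ℕ) : ℕ → Type
  | 0 => Empty
  | q+1 => CIter N q ⊕ Fin N

instance cFintype (N : ℕ) : ∀ q, Fintype (CIter N q)
  | 0 => inferInstanceAs (Fintype Empty)
  | q+1 => letI := cFintype N q; inferInstanceAs (Fintype (CIter N q ⊕ Fin N))

def cliqsG (N : ℕ) : ∀ q, SimpleGraph (CIter N q)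
  | 0 => ⊥
  | q+1 => dUnion (cliqsG N q) (⊤ : SimpleGraph (Fin N))

lemma cliqs_poly (N : ℕ) : ∀ q, indepPoly (cliqsG N q) = (1 + (N : Polynomial ℤ) * X) ^ q
  | 0 => by
    rw [cliqsG]
    have h : indepPoly (⊥ : SimpleGraph (CIter N 0)) = (X + 1) ^ (Fintype.card (CIter N 0)) :=
      indepPoly_bot
    rw [h]
    haveI : IsEmpty (CIter N 0) := inferInstanceAs (IsEmpty Empty)
    have : Fintype.card (CIter N 0) = 0 := Fintype.card_eq_zero
    rw [this, pow_zero, pow_zero]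
  | q+1 => by
    rw [cliqsG]
    have h : indepPoly (dUnion (cliqsG N q) (⊤ : SimpleGraph (Fin N))) =
        indepPoly (cliqsG N q) * indepPoly (⊤ : SimpleGraph (Fin N)) := indepPoly_dUnion
    refine h.trans ?_
    rw [cliqs_poly N q, indepPoly_top, Fintype.card_fin, pow_succ]

lemma cliqs_num (N : ℕ) (hN : 1 ≤ N) : ∀ q, indepNum (cliqsG N q) = q
  | 0 => by
    rw [cliqsG]
    have h : indepNum (⊥ : SimpleGraph (CIter N 0)) = Fintype.card (CIter N 0) := indepNum_bot
    rw [h]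
    haveI : IsEmpty (CIter N 0) := inferInstanceAs (IsEmpty Empty)
    exact Fintype.card_eq_zero
  | q+1 => by
    rw [cliqsG]
    haveI : Nonempty (Fin N) := ⟨⟨0, hN⟩⟩
    have h : indepNum (dUnion (cliqsG N q) (⊤ : SimpleGraph (Fin N))) =
        indepNum (cliqsG N q) + indepNum (⊤ : SimpleGraph (Fin N)) := indepNum_dUnion
    refine h.trans ?_
    rw [cliqs_num N hN q, indepNum_top]

lemma cliqs_wc (N : ℕ) (hN : 1 ≤ N) : ∀ q, WellCovered (cliqsG N q)
  | 0 => by rw [cliqsG]; exact wellCovered_bot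
  | q+1 => by
    rw [cliqsG]
    haveI : Nonempty (Fin N) := ⟨⟨0, hN⟩⟩
    exact wellCovered_dUnion (cliqs_wc N hN q) wellCovered_top

def MIter : ℕ → Type
  | 0 => Fin 4
  | t+1 => MIter t ⊕ Fin 4

instance mFintype : ∀ t, Fintype (MIter t)
  | 0 => inferInstanceAs (Fintype (Fin 4))
  | t+1 => letI := mFintype t; inferInstanceAs (Fintype (MIter t ⊕ Fin 4))

instance mNonempty : ∀ t, Nonempty (MIter t)
  | 0 => inferInstanceAs (Nonempty (Fin 4))
  | t+1 => letI := mNonempty t; inferInstanceAs (Nonempty (MIter t ⊕ Fin 4))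

def multG : ∀ t, SimpleGraph (MIter t)
  | 0 => ⊥
  | t+1 => join (multG t) (⊥ : SimpleGraph (Fin 4))

lemma mult_num : ∀ t, indepNum (multG t) = 4
  | 0 => by
    rw [multG]
    have h : indepNum (⊥ : SimpleGraph (MIter 0)) = Fintype.card (MIter 0) := indepNum_bot
    rw [h]; rfl
  | t+1 => by
    rw [multG]
    have h4 : indepNum (⊥ : SimpleGraph (Fin 4)) = 4 := by
      rw [indepNum_bot]; simp
    have h : indepNum (join (multG t) (⊥ : SimpleGraph (Fin 4))) = indepNum (multG t) :=
      indepNum_join (by rw [mult_num t, h4])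
    refine h.trans ?_
    rw [mult_num t]

lemma mult_wc : ∀ t, WellCovered (multG t)
  | 0 => by rw [multG]; exact wellCovered_bot
  | t+1 => by
    rw [multG]
    refine wellCovered_join (mult_wc t) wellCovered_bot ?_
    rw [mult_num t, indepNum_bot]; simp

lemma mult_poly : ∀ t, indepPoly (multG t) = ((t : Polynomial ℤ) + 1) * (X + 1) ^ 4 - (t : Polynomial ℤ)
  | 0 => by
    rw [multG]
    have h : indepPoly (⊥ : SimpleGraph (MIter 0)) = (X + 1) ^ (Fintype.card (MIter 0)) :=
      indepPoly_bot
    rw [h]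
    have : Fintype.card (MIter 0) = 4 := rfl
    rw [this]
    push_cast
    ring
  | t+1 => by
    rw [multG]
    have h : indepPoly (join (multG t) (⊥ : SimpleGraph (Fin 4))) =
        indepPoly (multG t) + indepPoly (⊥ : SimpleGraph (Fin 4)) - 1 := indepPoly_join
    refine h.trans ?_
    rw [mult_poly t, indepPoly_bot, Fintype.card_fin]
    push_cast
    ring

end Iterated

section PolyComp

noncomputable def pPoly : Polynomial ℤ :=
  C 1 * X ^ 0 + C 7240 * X ^ 1 + C 11400 * X ^ 2 + C 11200 * X ^ 3 + C 11800 * X ^ 4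

noncomputable def rP (N q : ℕ) : Polynomial ℤ := (1 + (N : Polynomial ℤ) * X) ^ q

lemma pPoly_coeff_two : pPoly.coeff 2 = 11400 := by
  norm_num [pPoly, coeff_X_pow, coeff_one, coeff_X]

lemma pPoly_coeff_three : pPoly.coeff 3 = 11200 := by
  norm_num [pPoly, coeff_X_pow, coeff_one, coeff_X]

lemma pPoly_coeff_four : pPoly.coeff 4 = 11800 := by
  norm_num [pPoly, coeff_X_pow, coeff_one, coeff_X]

lemma pPoly_coeff_ge {n : ℕ} (h : 5 ≤ n) : pPoly.coeff n = 0 := by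
  simp only [pPoly, coeff_add, coeff_C_mul, coeff_X_pow]
  rw [if_neg (by omega), if_neg (by omega), if_neg (by omega), if_neg (by omega),
    if_neg (by omega)]
  ring

lemma pPoly_natDegree : pPoly.natDegree ≤ 4 :=
  natDegree_le_iff_coeff_eq_zero.2 fun n hn => pPoly_coeff_ge (by omega)

lemma rP_natDegree (N q : ℕ) : (rP N q).natDegree ≤ q := by
  refine le_trans natDegree_pow_le ?_
  have h1 : (1 + (N : Polynomial ℤ) * X).natDegree ≤ 1 := by
    refine le_trans (natDegree_add_le _ _) ?_
    rw [natDegree_one]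
    refine max_le (by omega) ?_
    refine le_trans natDegree_mul_le ?_
    rw [natDegree_natCast, natDegree_X]
  calc q * (1 + (N : Polynomial ℤ) * X).natDegree ≤ q * 1 := Nat.mul_le_mul_left q h1
  _ = q := mul_one q

lemma pr_vanish (N q m : ℕ) (h : q + 4 < m) : (pPoly * rP N q).coeff m = 0 := by
  apply coeff_eq_zero_of_natDegree_lt
  have h1 := natDegree_mul_le (p := pPoly) (q := rP N q)
  have h2 := pPoly_natDegree
  have h3 := rP_natDegree N q
  omega

lemma coeff_step (s : Polynomial ℤ) (N : ℕ) (m : ℕ) :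
    (s * (1 + (N : Polynomial ℤ) * X)).coeff (m + 1) = s.coeff (m + 1) + (N : ℤ) * s.coeff m := by
  have h : s * (1 + (N : Polynomial ℤ) * X) = s + (s * C (N : ℤ)) * X := by
    rw [C_eq_natCast]; ring
  rw [h, coeff_add, coeff_mul_X, coeff_mul_C]
  ring

lemma pr_invariant (N : ℕ) : ∀ q : ℕ,
    (pPoly * rP N q).coeff (q + 4) = 11800 * (N : ℤ) ^ q ∧
    (N : ℤ) * (pPoly * rP N q).coeff (q + 3) =
      11200 * (N : ℤ) ^ (q + 1) + 11800 * q * (N : ℤ) ^ q ∧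
    (N : ℤ) ^ 2 * (pPoly * rP N q).coeff (q + 2) =
      11400 * (N : ℤ) ^ (q + 2) + 11200 * q * (N : ℤ) ^ (q + 1) +
        11800 * (q.choose 2) * (N : ℤ) ^ q
  | 0 => by
    rw [rP, pow_zero, mul_one]
    refine ⟨?_, ?_, ?_⟩
    · rw [show (0:ℕ)+4 = 4 from rfl, pPoly_coeff_four]; ring
    · rw [show (0:ℕ)+3 = 3 from rfl, pPoly_coeff_three]
      push_cast
      ring
    · rw [show (0:ℕ)+2 = 2 from rfl, pPoly_coeff_two]
      norm_num
      ring
  | q+1 => by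
    obtain ⟨ih1, ih2, ih3⟩ := pr_invariant N q
    have hmul : pPoly * rP N (q + 1) = (pPoly * rP N q) * (1 + (N : Polynomial ℤ) * X) := by
      rw [rP, rP, pow_succ]; ring
    have hstep : ∀ m, (pPoly * rP N (q + 1)).coeff (m + 1) =
        (pPoly * rP N q).coeff (m + 1) + (N : ℤ) * (pPoly * rP N q).coeff m := by
      intro m; rw [hmul]; exact coeff_step _ _ _
    have hv : (pPoly * rP N q).coeff (q + 5) = 0 := pr_vanish N q _ (by omega)
    refine ⟨?_, ?_, ?_⟩
    · have h := hstep (q + 4)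
      rw [show q + 1 + 4 = q + 4 + 1 by omega, h, show q + 4 + 1 = q + 5 by omega, hv, ih1]
      push_cast
      ring
    · have h := hstep (q + 3)
      rw [show q + 1 + 3 = q + 3 + 1 by omega, h]
      push_cast
      linear_combination (N : ℤ) * ih1 + (N : ℤ) * ih2
    · have h := hstep (q + 2)
      rw [show q + 1 + 2 = q + 2 + 1 by omega, h,
        show (q + 1).choose 2 = q.choose 2 + q by
          rw [show (2:ℕ) = 1 + 1 from rfl, Nat.choose_succ_succ, Nat.choose_one_right,
            Nat.add_comm, Nat.succ_eq_add_one]]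
      push_cast
      linear_combination (N : ℤ) * ih2 + (N : ℤ) * ih3

lemma pr_ineqs (k : ℕ) (hk : 4 ≤ k) :
    (pPoly * rP (20 * k) (k - 4)).coeff (k - 1) < (pPoly * rP (20 * k) (k - 4)).coeff k ∧
    (pPoly * rP (20 * k) (k - 4)).coeff (k - 1) < (pPoly * rP (20 * k) (k - 4)).coeff (k - 2) := by
  set N := 20 * k with hN
  set q := k - 4 with hq
  obtain ⟨h1, h2, h3⟩ := pr_invariant N q
  have hqk : (q : ℤ) = (k : ℤ) - 4 := by
    rw [hq]; push_cast [Nat.cast_sub hk]; ring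
  have hNk : (N : ℤ) = 20 * (k : ℤ) := by push_cast [hN]; ring
  have hk4 : (4 : ℤ) ≤ (k : ℤ) := by exact_mod_cast hk
  have hNpos : (0 : ℤ) < (N : ℤ) := by rw [hNk]; linarith
  have hPpos : (0 : ℤ) < (N : ℤ) ^ q := pow_pos hNpos q
  have hc2 : (0 : ℤ) ≤ (q.choose 2 : ℤ) := by positivity
  have hp1 : ((N : ℤ)) ^ (q + 1) = (N : ℤ) ^ q * (N : ℤ) := pow_succ _ _
  have hp2 : ((N : ℤ)) ^ (q + 2) = (N : ℤ) ^ q * (N : ℤ) * (N : ℤ) := by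
    rw [pow_succ, pow_succ]
  have e1 : k = q + 4 := by omega
  have e2 : k - 1 = q + 3 := by omega
  have e3 : k - 2 = q + 2 := by omega
  rw [e2, e3, e1]
  constructor
  · have key : (N : ℤ) * (pPoly * rP N q).coeff (q + 3) <
        (N : ℤ) * (pPoly * rP N q).coeff (q + 4) := by
      rw [h1, h2]
      have hgap : (0 : ℤ) < 600 * (N : ℤ) - 11800 * (q : ℤ) := by
        rw [hNk, hqk]; linarith
      nlinarith [mul_pos hgap hPpos, hp1]
    exact lt_of_mul_lt_mul_left key hNpos.le
  · have key : (N : ℤ) ^ 2 * (pPoly * rP N q).coeff (q + 3) <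
        (N : ℤ) ^ 2 * (pPoly * rP N q).coeff (q + 2) := by
      have h2' : (N : ℤ) ^ 2 * (pPoly * rP N q).coeff (q + 3) =
          11200 * (N : ℤ) ^ q * (N : ℤ) * (N : ℤ) + 11800 * (q : ℤ) * ((N : ℤ) ^ q * (N : ℤ)) := by
        have e : (N : ℤ) ^ 2 * (pPoly * rP N q).coeff (q + 3) =
            (N : ℤ) * ((N : ℤ) * (pPoly * rP N q).coeff (q + 3)) := by ring
        rw [e, h2, hp1]; ring
      have h3' : (N : ℤ) ^ 2 * (pPoly * rP N q).coeff (q + 2) =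
          11400 * ((N : ℤ) ^ q * (N : ℤ) * (N : ℤ)) + 11200 * (q : ℤ) * ((N : ℤ) ^ q * (N : ℤ)) +
            11800 * (q.choose 2 : ℤ) * (N : ℤ) ^ q := by
        rw [h3, hp1, hp2]
      rw [h2', h3']
      have hgap : (0 : ℤ) < 200 * (N : ℤ) - 600 * (q : ℤ) := by
        rw [hNk, hqk]; linarith
      nlinarith [mul_pos (mul_pos hgap hNpos) hPpos, mul_nonneg hc2 hPpos.le]
    exact lt_of_mul_lt_mul_left key (by positivity)

end PolyComp

lemma polyB_eq : indepPoly (join (cliqsG 10 4) (multG 1799)) = pPoly := by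
  have h : indepPoly (join (cliqsG 10 4) (multG 1799)) =
      indepPoly (cliqsG 10 4) + indepPoly (multG 1799) - 1 := indepPoly_join
  rw [h, cliqs_poly 10 4, mult_poly 1799, pPoly]
  simp only [map_ofNat, map_one]
  push_cast
  ring

theorem aux_exists_connected_wellCovered_not_unimodal (k : ℕ) (hk : 4 ≤ k) :
    ∃ (n : ℕ) (G : SimpleGraph (Fin n)), G.Connected ∧ WellCovered G ∧
      indepNum G = k ∧ ¬ PolyUnimodal (indepPoly G) := by
  set N := 20 * k with hN
  set q := k - 4 with hq
  have hN1 : 1 ≤ N := by omega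
  have hnum10 : indepNum (cliqsG 10 4) = 4 := cliqs_num 10 (by norm_num) 4
  have hnumM : indepNum (multG 1799) = 4 := mult_num 1799
  have wcB : WellCovered (join (cliqsG 10 4) (multG 1799)) :=
    wellCovered_join (cliqs_wc 10 (by norm_num) 4) (mult_wc 1799) (by rw [hnum10, hnumM])
  have numB : indepNum (join (cliqsG 10 4) (multG 1799)) = 4 := by
    rw [indepNum_join (by rw [hnum10, hnumM]), hnum10]
  have wcA : WellCovered (dUnion (cliqsG N q) (join (cliqsG 10 4) (multG 1799))) :=
    wellCovered_dUnion (cliqs_wc N hN1 q) wcB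
  have numA : indepNum (dUnion (cliqsG N q) (join (cliqsG 10 4) (multG 1799))) = q + 4 := by
    rw [indepNum_dUnion, cliqs_num N hN1 q, numB]
  have polyA : indepPoly (dUnion (cliqsG N q) (join (cliqsG 10 4) (multG 1799))) =
      pPoly * rP N q := by
    have h : indepPoly (dUnion (cliqsG N q) (join (cliqsG 10 4) (multG 1799))) =
        indepPoly (cliqsG N q) * indepPoly (join (cliqsG 10 4) (multG 1799)) := indepPoly_dUnion
    rw [h, cliqs_poly N q, polyB_eq, rP]
    ring
  have wcG : WellCovered (join (dUnion (cliqsG N q) (join (cliqsG 10 4) (multG 1799)))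
      (dUnion (cliqsG N q) (join (cliqsG 10 4) (multG 1799)))) :=
    wellCovered_join wcA wcA rfl
  have numG : indepNum (join (dUnion (cliqsG N q) (join (cliqsG 10 4) (multG 1799)))
      (dUnion (cliqsG N q) (join (cliqsG 10 4) (multG 1799)))) = k := by
    rw [indepNum_join rfl, numA]
    omega
  have polyG : indepPoly (join (dUnion (cliqsG N q) (join (cliqsG 10 4) (multG 1799)))
      (dUnion (cliqsG N q) (join (cliqsG 10 4) (multG 1799)))) =
      2 * (pPoly * rP N q) - 1 := by
    have h : indepPoly (join (dUnion (cliqsG N q) (join (cliqsG 10 4) (multG 1799)))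
        (dUnion (cliqsG N q) (join (cliqsG 10 4) (multG 1799)))) =
        indepPoly (dUnion (cliqsG N q) (join (cliqsG 10 4) (multG 1799))) +
        indepPoly (dUnion (cliqsG N q) (join (cliqsG 10 4) (multG 1799))) - 1 := indepPoly_join
    rw [h, polyA]
    ring
  haveI hne : Nonempty (CIter N q ⊕ (CIter 10 4 ⊕ MIter 1799)) :=
    ⟨Sum.inr (Sum.inr (Classical.arbitrary (MIter 1799)))⟩
  have connG : (join (dUnion (cliqsG N q) (join (cliqsG 10 4) (multG 1799)))
      (dUnion (cliqsG N q) (join (cliqsG 10 4) (multG 1799)))).Connected := connected_join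
  have notuni : ¬ PolyUnimodal (indepPoly
      (join (dUnion (cliqsG N q) (join (cliqsG 10 4) (multG 1799)))
        (dUnion (cliqsG N q) (join (cliqsG 10 4) (multG 1799))))) := by
    obtain ⟨hlt1, hlt2⟩ := pr_ineqs k hk
    rw [← hN, ← hq] at hlt1 hlt2
    have hco : ∀ m, 1 ≤ m → (2 * (pPoly * rP N q) - 1 : Polynomial ℤ).coeff m =
        2 * (pPoly * rP N q).coeff m := by
      intro m hm
      rw [coeff_sub, coeff_one, if_neg (by omega), two_mul, coeff_add]
      ring
    rw [polyG]
    rintro ⟨m, hup, hdown⟩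
    rcases le_total m (k - 1) with hm | hm
    · have h := hdown (k - 1) k hm (by omega)
      rw [hco (k - 1) (by omega), hco k (by omega)] at h
      linarith
    · have h := hup (k - 2) (k - 1) (by omega) hm
      rw [hco (k - 1) (by omega), hco (k - 2) (by omega)] at h
      linarith
  exact ⟨Fintype.card ((CIter N q ⊕ (CIter 10 4 ⊕ MIter 1799)) ⊕
      (CIter N q ⊕ (CIter 10 4 ⊕ MIter 1799))),
    mapE (Fintype.equivFin _) _,
    connected_mapE connG, wellCovered_mapE wcG,
    by rw [indepNum_mapE]; exact numG,
    by rw [indepPoly_mapE]; exact notuni⟩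

/-- For every `k ≥ 4`, there exists a finite connected well-covered graph `G` with
`α(G) = k` whose independence polynomial is not unimodal. -/
theorem exists_connected_wellCovered_not_unimodal (k : ℕ) (hk : 4 ≤ k) :
    ∃ (n : ℕ) (G : SimpleGraph (Fin n)), G.Connected ∧ WellCovered G ∧
      indepNum G = k ∧ ¬ PolyUnimodal (indepPoly G) := by
  exact aux_exists_connected_wellCovered_not_unimodal k hk
end
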